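/- Let X be a uniformly discrete metric space, 0 < α ≤ 1, and A either Lip_α(X) or lip_α(X). Then A satisfies condition (M). -/
import Mathlib

open WeakDual Topology Filter

/-- The set of Hölder difference quotients of `f`. -/
def lipRatioSet {X : Type*} [MetricSpace X] (α : ℝ) (f : X → ℂ) : Set ℝ :=
  {r | ∃ x y : X, x ≠ y ∧ r = ‖f x - f y‖ / dist x y ^ α}

/-- The Hölder seminorm of `f`. -/
noncomputable def lipSemi {X : Type*} [MetricSpace X] (α : ℝ) (f : X → ℂ) : ℝ :=
  sSup ({0} ∪ lipRatioSet α f)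

/-- The sup norm of `f`. -/
noncomputable def supNorm {X : Type*} (f : X → ℂ) : ℝ :=
  sSup ({0} ∪ Set.range fun x => ‖f x‖)

/-- The norm of the Lipschitz algebra `Lip_α(X)`. -/
noncomputable def lipNorm {X : Type*} [MetricSpace X] (α : ℝ) (f : X → ℂ) : ℝ :=
  supNorm f + lipSemi α f

/-- Membership in the (big) Lipschitz algebra `Lip_α(X)`. -/
def MemLipAlg {X : Type*} [MetricSpace X] (α : ℝ) (f : X → ℂ) : Prop :=
  (∃ B : ℝ, ∀ x, ‖f x‖ ≤ B) ∧ (∃ C : ℝ, ∀ x y, ‖f x - f y‖ ≤ C * dist x y ^ α)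

/-- Membership in the little Lipschitz algebra `lip_α(X)`. -/
def MemLittleLip {X : Type*} [MetricSpace X] (α : ℝ) (f : X → ℂ) : Prop :=
  MemLipAlg α f ∧
    ∀ ε > (0:ℝ), ∃ δ > (0:ℝ), ∀ x y : X, x ≠ y → dist x y < δ →
      ‖f x - f y‖ ≤ ε * dist x y ^ α

/-- `X` is uniformly discrete with bound `dX`. -/
def UniformlyDiscrete (X : Type*) [MetricSpace X] (dX : ℝ) : Prop :=
  ∀ x y : X, x ≠ y → dX < dist x y

lemma supNorm_le' {X : Type*} {f : X → ℂ} {B : ℝ} (hB : 0 ≤ B) (h : ∀ x, ‖f x‖ ≤ B) :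
    supNorm f ≤ B := by
  apply Real.sSup_le _ hB
  rintro r (hr | ⟨x, rfl⟩)
  · rw [Set.mem_singleton_iff] at hr; exact hr ▸ hB
  · exact h x

lemma lipSemi_le' {X : Type*} [MetricSpace X] {α : ℝ} {f : X → ℂ} {C : ℝ} (hC : 0 ≤ C)
    (h : ∀ x y : X, x ≠ y → ‖f x - f y‖ / dist x y ^ α ≤ C) : lipSemi α f ≤ C := by
  apply Real.sSup_le _ hC
  rintro r (hr | ⟨x, y, hxy, rfl⟩)
  · rw [Set.mem_singleton_iff] at hr; exact hr ▸ hC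
  · exact h x y hxy

lemma indicator_memLittleLip {X : Type*} [MetricSpace X] {α dX : ℝ} (hα : 0 < α) (hdX : 0 < dX)
    (hud : UniformlyDiscrete X dX) (S : Set X) :
    MemLittleLip α (S.indicator fun _ => (1:ℂ)) := by
  have hP : (0:ℝ) < dX ^ α := Real.rpow_pos_of_pos hdX α
  have hb : ∀ x, ‖S.indicator (fun _ => (1:ℂ)) x‖ ≤ 1 := by
    intro x
    by_cases hx : x ∈ S <;> simp [Set.indicator_of_mem, Set.indicator_of_notMem, hx]
  refine ⟨⟨⟨1, hb⟩, ⟨2 / dX ^ α, ?_⟩⟩, ?_⟩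
  · intro x y
    rcases eq_or_ne x y with rfl | hxy
    · simp [Real.zero_rpow hα.ne']
    · have hd : dX ^ α ≤ dist x y ^ α :=
        Real.rpow_le_rpow hdX.le (hud x y hxy).le hα.le
      have h2 : ‖S.indicator (fun _ => (1:ℂ)) x - S.indicator (fun _ => (1:ℂ)) y‖ ≤ 2 := by
        calc _ ≤ ‖S.indicator (fun _ => (1:ℂ)) x‖ + ‖S.indicator (fun _ => (1:ℂ)) y‖ :=
              norm_sub_le _ _
          _ ≤ 2 := by linarith [hb x, hb y]
      calc ‖S.indicator (fun _ => (1:ℂ)) x - S.indicator (fun _ => (1:ℂ)) y‖ ≤ 2 := h2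
        _ = 2 / dX ^ α * dX ^ α := by field_simp
        _ ≤ 2 / dX ^ α * dist x y ^ α := by
            apply mul_le_mul_of_nonneg_left hd (by positivity)
  · intro ε hε
    exact ⟨dX, hdX, fun x y hxy hlt => absurd (hud x y hxy) (not_lt.2 hlt.le)⟩

variable (A : Type*) [NormedCommRing A] [NormedAlgebra ℂ A]

/-- Condition (M). -/
def ConditionM : Prop :=
  (∀ (x : WeakDual.characterSpace ℂ A) (U : Set (WeakDual.characterSpace ℂ A)),
      IsOpen U → x ∈ U →
      ∃ a : A, x a = 1 ∧ ∀ y : WeakDual.characterSpace ℂ A, y ∉ U → y a = 0) ∧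
  ∀ (x : WeakDual.characterSpace ℂ A) (a : A), x a = 0 →
    ∀ U ∈ 𝓝 x, ∀ ε > (0:ℝ), ∃ b : A,
      (∃ V ∈ 𝓝 x, ∀ y ∈ V, y b = 1) ∧
      closure {y : WeakDual.characterSpace ℂ A | y b ≠ 0} ⊆ U ∧ ‖b * a‖ < ε

/-- if `X` is uniformly discrete, then both `Lip_α(X)` and `lip_α(X)`
(realized as the commutative Banach algebra `A`) satisfy condition (M). -/
theorem uniformlyDiscrete_lip_conditionM
    {X : Type*} [MetricSpace X] (α dX : ℝ) (hα : 0 < α ∧ α ≤ 1) (hdX : 0 < dX)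
    (hud : UniformlyDiscrete X dX)
    [CompleteSpace A] (j : A →ₐ[ℂ] (X → ℂ)) (hinj : Function.Injective j)
    (hrange : Set.range j = {f | MemLipAlg α f} ∨ Set.range j = {f | MemLittleLip α f})
    (hnorm : ∀ a : A, ‖a‖ = lipNorm α (j a))
    (ev : X → WeakDual.characterSpace ℂ A) (hev : Continuous ev)
    (heval : ∀ (x : X) (a : A), ev x a = j a x) (hdenseX : DenseRange ev) :
    ConditionM A := by
  obtain ⟨hα0, hα1⟩ := hα
  have hP : (0:ℝ) < dX ^ α := Real.rpow_pos_of_pos hdX α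
  have contEval : ∀ a : A, Continuous fun ψ : characterSpace ℂ A => ψ a := fun a =>
    (WeakDual.eval_continuous a).comp continuous_subtype_val
  have claim1 : ∀ N : Set (characterSpace ℂ A), IsOpen N → ∀ ψ ∈ N,
      ψ ∈ closure (ev '' (ev ⁻¹' N)) := by
    intro N hN ψ hψ
    rw [mem_closure_iff]
    intro O hO hψO
    obtain ⟨x, hx⟩ := hdenseX.exists_mem_open (hO.inter hN) ⟨ψ, hψO, hψ⟩
    exact ⟨ev x, hx.1, ⟨x, hx.2, rfl⟩⟩
  have key : ∀ W : Set (characterSpace ℂ A), IsOpen W →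
      ∃ b : A, j b = (ev ⁻¹' W).indicator (fun _ => (1:ℂ)) ∧
        (∀ ψ ∈ W, ψ b = 1) ∧ {ψ : characterSpace ℂ A | ψ b ≠ 0} ⊆ closure W := by
    intro W hW
    have hmem : (ev ⁻¹' W).indicator (fun _ => (1:ℂ)) ∈ Set.range j := by
      have h1 := indicator_memLittleLip hα0 hdX hud (ev ⁻¹' W)
      rcases hrange with h | h <;> rw [h]
      · exact h1.1
      · exact h1
    obtain ⟨b, hb⟩ := hmem
    have heb : ∀ x : X, x ∈ ev ⁻¹' W → ev x b = 1 := by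
      intro x hx
      rw [heval, hb, Set.indicator_of_mem hx]
    have hone : ∀ ψ ∈ W, ψ b = 1 := by
      intro ψ hψ
      have hEq : Set.EqOn (fun ψ : characterSpace ℂ A => ψ b) (fun _ => (1:ℂ))
          (ev '' (ev ⁻¹' W)) := by
        rintro _ ⟨x, hx, rfl⟩; exact heb x hx
      exact hEq.closure (contEval b) continuous_const (claim1 W hW ψ hψ)
    refine ⟨b, hb, hone, ?_⟩
    intro ψ hψ
    have hNopen : IsOpen {φ : characterSpace ℂ A | φ b ≠ 0} :=
      isOpen_compl_singleton.preimage (contEval b)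
    have h1 := claim1 _ hNopen ψ hψ
    have h2 : ev '' (ev ⁻¹' {φ : characterSpace ℂ A | φ b ≠ 0}) ⊆ W := by
      rintro _ ⟨x, hx, rfl⟩
      simp only [Set.mem_preimage, Set.mem_setOf_eq] at hx
      rw [heval, hb] at hx
      by_contra hxW
      exact hx (Set.indicator_of_notMem (s := ev ⁻¹' W) hxW _)
    exact closure_mono h2 h1
  constructor
  · -- part 1
    intro x U hU hx
    obtain ⟨s, hs, hcl, hsub⟩ := exists_mem_nhds_isClosed_subset (hU.mem_nhds hx)
    obtain ⟨b, _, hone, hsupp⟩ := key (interior s) isOpen_interior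
    refine ⟨b, hone x (mem_interior_iff_mem_nhds.2 hs), ?_⟩
    intro y hy
    by_contra h0
    exact hy (hsub (hcl.closure_eq ▸ (closure_mono interior_subset) (hsupp h0)))
  · -- part 2
    intro φ a hφa U hU ε hε
    have hc : (0:ℝ) < 1 + 2 / dX ^ α := by positivity
    set δ : ℝ := ε / 2 / (1 + 2 / dX ^ α) with hδ_def
    have hδ : 0 < δ := by positivity
    set N := interior U ∩ {ψ : characterSpace ℂ A | ‖ψ a‖ < δ} with hN_def
    have hNopen : IsOpen N := isOpen_interior.inter
      (isOpen_lt ((contEval a).norm) continuous_const)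
    have hφN : φ ∈ N := ⟨mem_interior_iff_mem_nhds.2 hU, by
      simp only [Set.mem_setOf_eq, hφa, norm_zero]; exact hδ⟩
    obtain ⟨s, hs, hcl, hsub⟩ := exists_mem_nhds_isClosed_subset (hNopen.mem_nhds hφN)
    obtain ⟨b, hjb, hone, hsupp⟩ := key (interior s) isOpen_interior
    refine ⟨b, ⟨interior s, isOpen_interior.mem_nhds (mem_interior_iff_mem_nhds.2 hs), hone⟩,
      ?_, ?_⟩
    · intro ψ hψ
      have h1 : ψ ∈ closure (interior s) :=
        closure_minimal hsupp isClosed_closure hψ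
      have h2 : ψ ∈ s := hcl.closure_eq ▸ (closure_mono interior_subset) h1
      exact interior_subset (hsub h2).1
    · have hnormle : ∀ x : X, ‖j (b * a) x‖ ≤ δ := by
        intro x
        rw [map_mul]
        by_cases hx : x ∈ ev ⁻¹' interior s
        · have h1 : ev x ∈ N := hsub (interior_subset hx)
          have h2 : ‖j a x‖ < δ := by rw [← heval]; exact h1.2
          have h3 : (j b * j a) x = j a x := by
            rw [Pi.mul_apply, hjb, Set.indicator_of_mem hx, one_mul]
          rw [h3]; exact h2.le
        · have h3 : (j b * j a) x = 0 := by
            rw [Pi.mul_apply, hjb, Set.indicator_of_notMem hx, zero_mul]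
          rw [h3]; simp [hδ.le]
      have hsup : supNorm (j (b * a)) ≤ δ := supNorm_le' hδ.le hnormle
      have hsemi : lipSemi α (j (b * a)) ≤ 2 * δ / dX ^ α := by
        apply lipSemi_le' (by positivity)
        intro x y hxy
        have hd : dX ^ α ≤ dist x y ^ α := Real.rpow_le_rpow hdX.le (hud x y hxy).le hα0.le
        have hnum : ‖j (b * a) x - j (b * a) y‖ ≤ 2 * δ := by
          calc _ ≤ ‖j (b * a) x‖ + ‖j (b * a) y‖ := norm_sub_le _ _
            _ ≤ 2 * δ := by linarith [hnormle x, hnormle y]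
        exact div_le_div₀ (by positivity) hnum hP hd
      have hmul : δ * (1 + 2 / dX ^ α) = ε / 2 := div_mul_cancel₀ _ hc.ne'
      have hend : δ + 2 * δ / dX ^ α = ε / 2 := by
        rw [← hmul]; ring
      have := hnorm (b * a)
      rw [lipNorm] at this
      rw [this]
      linarith
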